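/- Let a1,…,an ∈ Σ be letters and L1,…,Lk ⊆ Σ* be languages. If a1* × a2* × ⋯ × an* ⊆ dcl(F_n(L1·L2⋯Lk)), then there is a decomposition n = n1+⋯+nk such that a1* × ⋯ × an* ⊆ dcl(F_{n1}(L1) × F_{n2}(L2) × ⋯ × F_{nk}(Lk)). -/

import Mathlib

/-- Kleene star of a language, as a set of lists. -/
def LangStar {α : Type*} (K : Set (List α)) : Set (List α) :=
  {w | ∃ ws : List (List α), (∀ u ∈ ws, u ∈ K) ∧ w = ws.flatten}

/-- Concatenation of two languages. -/
def LangConc {α : Type*} (K L : Set (List α)) : Set (List α) :=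
  {w | ∃ u ∈ K, ∃ v ∈ L, w = u ++ v}

/-- Concatenation `L 0 · L 1 ⋯ L (k-1)` of a finite family of languages. -/
def LangConcFn {α : Type*} {k : ℕ} (Ls : Fin k → Set (List α)) : Set (List α) :=
  {w | ∃ ws : Fin k → List α, (∀ j, ws j ∈ Ls j) ∧ w = (List.ofFn ws).flatten}

/-- `w ^ x` : the `x`-fold repetition of the word `w`. -/
def wpow {α : Type*} (w : List α) (x : ℕ) : List α := (List.replicate x w).flatten

/-- The set of factors `F(L) = {w : L ∩ Σ*wΣ* ≠ ∅}`. -/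
def Factors {α : Type*} (L : Set (List α)) : Set (List α) :=
  {w | ∃ u ∈ L, ∃ x y : List α, u = x ++ w ++ y}

/-- The set of factor tuples
`F_n(L) = {(w1,…,wn) : Σ*w1Σ*w2Σ*⋯wnΣ* ∩ L ≠ ∅}`. -/
def FactorTuples {α : Type*} (n : ℕ) (L : Set (List α)) : Set (Fin n → List α) :=
  {w | ∃ u ∈ L, ∃ g : Fin (n + 1) → List α,
      u = (List.ofFn fun i : Fin n => g i.castSucc ++ w i).flatten ++ g (Fin.last n)}

/-- A language is bounded if `L ⊆ w1* ⋯ wn*` for some words `w1,…,wn`. -/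
def IsBoundedLang {α : Type*} (L : Set (List α)) : Prop :=
  ∃ (n : ℕ) (ws : Fin n → List α), L ⊆ LangConcFn fun i => LangStar {ws i}

/-- A language is regular if it is accepted by a finite (deterministic) automaton. -/
def IsRegularLang {α : Type*} (L : Set (List α)) : Prop :=
  ∃ (σ : Type) (_ : Fintype σ) (M : DFA α σ), ∀ w, w ∈ M.accepts ↔ w ∈ L

/-- `FireList T v ts v'` : firing the sequence `ts` of transitions (all from `T`)
leads from configuration `v` to `v'`, keeping all intermediate configurations
nonnegative (automatic, as configurations live in `Fin d → ℕ`). -/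
def FireList {d : ℕ} (T : Set (Fin d → ℤ)) :
    (Fin d → ℕ) → List (Fin d → ℤ) → (Fin d → ℕ) → Prop
  | v, [], v' => v = v'
  | v, τ :: ts, v' => τ ∈ T ∧ ∃ u : Fin d → ℕ,
      (∀ i, (u i : ℤ) = (v i : ℤ) + τ i) ∧ FireList T u ts v'

/-- A labeled vector addition system over the alphabet `α`. -/
structure LVAS (α : Type*) where
  d : ℕ
  T : Finset (Fin d → ℤ)
  s : Fin d → ℕ
  t : Fin d → ℕ
  /-- the labeling `h : T → Σ ∪ {ε}`, with `none` playing the role of `ε` -/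
  lab : (Fin d → ℤ) → Option α

/-- The language of a labeled VAS: labels of firing sequences from source to target. -/
def LVAS.lang {α : Type*} (V : LVAS α) : Set (List α) :=
  {w | ∃ ts : List (Fin V.d → ℤ), FireList (↑V.T) V.s ts V.t ∧ ts.filterMap V.lab = w}

/-- A VAS language is the language of some labeled VAS. -/
def IsVASLang {α : Type*} (L : Set (List α)) : Prop := ∃ V : LVAS α, L = V.lang

/-- Given a decomposition `n = ns 0 + ⋯ + ns (k-1)`, the index in `Fin n` of the
`i`-th position of the `j`-th block. -/
def blockIdx {k n : ℕ} (ns : Fin k → ℕ) (h : ∑ j, ns j = n) (j : Fin k)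
    (i : Fin (ns j)) : Fin n :=
  ⟨(∑ j' ∈ Finset.univ.filter (fun j' => j' < j), ns j') + (i : ℕ), by
    have hj : j ∉ Finset.univ.filter (fun j' => j' < j) := by simp
    have h1 : ∑ j' ∈ insert j (Finset.univ.filter (fun j' => j' < j)), ns j'
        ≤ ∑ j', ns j' := Finset.sum_le_sum_of_subset (Finset.subset_univ _)
    rw [Finset.sum_insert hj] at h1
    have h2 := i.isLt
    omega⟩

/-- The product set `F_{n1}(L1) × ⋯ × F_{nk}(Lk) ⊆ (Σ*)^n` for a decomposition
`n = n1 + ⋯ + nk`: those `n`-tuples whose `j`-th block belongs to `F_{nj}(Lj)`. -/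
def ProdFT {α : Type*} {k n : ℕ} (ns : Fin k → ℕ) (Ls : Fin k → Set (List α))
    (h : ∑ j, ns j = n) : Set (Fin n → List α) :=
  {w | ∀ j : Fin k,
    (fun i : Fin (ns j) => w (blockIdx ns h j i)) ∈ FactorTuples (ns j) (Ls j)}

/-- An `n`-dimensional unboundedness predicate. -/
def IsUnbPred {α : Type*} (n : ℕ) (p : Set (Fin n → List α) → Prop) : Prop :=
  (∀ S T : Set (Fin n → List α), p S → S ⊆ T → p T) ∧
  (∀ S T : Set (Fin n → List α), p (S ∪ T) → p S ∨ p T) ∧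
  (∀ (k : ℕ) (Ls : Fin k → Set (List α)), p (FactorTuples n (LangConcFn Ls)) →
     ∃ (ns : Fin k → ℕ) (h : ∑ j, ns j = n), p (ProdFT ns Ls h))

/-- Downward closure of a set of `n`-tuples of words w.r.t. the (scattered) subword
ordering in each component. -/
def dclT {α : Type*} {n : ℕ} (S : Set (Fin n → List α)) : Set (Fin n → List α) :=
  {u | ∃ v ∈ S, ∀ i, List.Sublist (u i) (v i)}

/-- `numF K w = |w|_K`, the largest `m` such that `m` non-overlapping factors from `K`
occur in `w` in order. -/
noncomputable def numF {α : Type*} (K : Set (List α)) (w : List α) : ℕ :=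
  sSup {m | ∃ ws : Fin m → List α, (∀ i, ws i ∈ K) ∧ ws ∈ FactorTuples m {w}}

/-- `cWrap c L = cLc = {cuc : u ∈ L}`. -/
def cWrap {α : Type*} (c : α) (L : Set (List α)) : Set (List α) :=
  {w | ∃ u ∈ L, w = c :: (u ++ [c])}

/-- `cSepStar c L = c(Lc)* = {c u1 c u2 c ⋯ um c : m ≥ 0, u1,…,um ∈ L}`. -/
def cSepStar {α : Type*} (c : α) (L : Set (List α)) : Set (List α) :=
  {w | ∃ us : List (List α), (∀ u ∈ us, u ∈ L) ∧
      w = c :: (us.map (fun u => u ++ [c])).flatten}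

/-- A subset of `ℕ^n` is recognizable if it is saturated by an additive monoid
morphism into a finite monoid. -/
def IsRecognizable {n : ℕ} (U : Set (Fin n → ℕ)) : Prop :=
  ∃ (M : Type) (_ : AddMonoid M) (_ : Finite M) (φ : (Fin n → ℕ) →+ M),
    U = φ ⁻¹' (φ '' U)

/-- `U ⊆ ℕ^n` is a section of a VAS reachability set. -/
def IsVASReachSection {n : ℕ} (U : Set (Fin n → ℕ)) : Prop :=
  ∃ (N : ℕ) (T : Finset (Fin N → ℤ)) (s : Fin N → ℕ) (I : Finset (Fin N))
    (x : Fin N → ℕ) (e : Fin n → Fin N),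
    StrictMono e ∧ (∀ j, e j ∉ I) ∧ (∀ i, i ∉ I → ∃ j, e j = i) ∧
    U = {u | ∃ v : Fin N → ℕ, (∃ ts, FireList (↑T) s ts v) ∧
          (∀ i ∈ I, v i = x i) ∧ (∀ j, v (e j) = u j)}


namespace SupPredAux

open List

variable {α : Type*}

def powword {n : ℕ} (a : Fin n → α) (c : Fin n → ℕ) : List α :=
  (List.ofFn fun i => List.replicate (c i) (a i)).flatten

lemma powword_succ {n : ℕ} (a : Fin (n + 1) → α) (c : Fin (n + 1) → ℕ) :
    powword a c = List.replicate (c 0) (a 0) ++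
      powword (fun i => a i.succ) (fun i => c i.succ) := by
  simp [powword, List.ofFn_succ]

lemma length_powword {n : ℕ} (a : Fin n → α) (c : Fin n → ℕ) :
    (powword a c).length = ∑ i, c i := by
  simp [powword, List.length_flatten, List.map_ofFn, Function.comp, List.sum_ofFn]

lemma powword_eq_nil {n : ℕ} (a : Fin n → α) {c : Fin n → ℕ} (h : ∀ i, c i = 0) :
    powword a c = [] := by
  apply List.eq_nil_of_length_eq_zero
  rw [length_powword]
  simp [h]


lemma flatten_ofFn_sublist {n : ℕ} {z w : Fin n → List α} (h : ∀ i, z i <+ w i) :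
    (List.ofFn z).flatten <+ (List.ofFn w).flatten := by
  induction n with
  | zero => simp
  | succ m ih =>
    rw [List.ofFn_succ (f := z), List.ofFn_succ (f := w), List.flatten_cons,
      List.flatten_cons]
    exact (h 0).append (ih (fun i => h i.succ))

lemma sublist_flatten {l₁ l₂ : List (List α)} (h : l₁ <+ l₂) :
    l₁.flatten <+ l₂.flatten := by
  induction h with
  | slnil => simp
  | cons a h ih => exact ih.trans (by rw [List.flatten_cons]; exact List.sublist_append_right _ _)
  | cons_cons a h ih =>
    rw [List.flatten_cons, List.flatten_cons]
    exact (List.Sublist.refl a).append ih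

lemma embed : ∀ {m : ℕ} (z : Fin m → List α) (u : List α),
    (List.ofFn z).flatten <+ u →
    ∃ (q : Fin m → List α) (rest : List α),
      u = (List.ofFn q).flatten ++ rest ∧ ∀ t, z t <+ q t := by
  intro m
  induction m with
  | zero => exact fun z u _ => ⟨fun t => t.elim0, u, by simp, fun t => t.elim0⟩
  | succ m ih =>
    intro z u h
    rw [List.ofFn_succ, List.flatten_cons] at h
    obtain ⟨u1, u2, rfl, h1, h2⟩ := List.append_sublist_iff.mp h
    obtain ⟨q', rest, rfl, hq'⟩ := ih _ _ h2
    refine ⟨Fin.cons u1 q', rest, ?_, ?_⟩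
    · rw [List.ofFn_succ]
      simp [List.append_assoc]
    · intro t
      induction t using Fin.cases with
      | zero => simpa using h1
      | succ i => simpa using hq' i

lemma splitsub : ∀ {k : ℕ} (ws : Fin k → List α) (z : List α),
    z <+ (List.ofFn ws).flatten →
    ∃ ps : Fin k → List α, z = (List.ofFn ps).flatten ∧ ∀ j, ps j <+ ws j := by
  intro k
  induction k with
  | zero =>
    intro ws z h
    refine ⟨fun j => j.elim0, ?_, fun j => j.elim0⟩
    simpa using List.sublist_nil.mp (by simpa using h)
  | succ k ih =>
    intro ws z h
    rw [List.ofFn_succ, List.flatten_cons] at h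
    obtain ⟨z1, z2, rfl, h1, h2⟩ := List.sublist_append_iff.mp h
    obtain ⟨ps', hz2, hps⟩ := ih _ _ h2
    refine ⟨Fin.cons z1 ps', ?_, ?_⟩
    · rw [List.ofFn_succ]
      simp [hz2]
    · intro j
      induction j using Fin.cases with
      | zero => simpa using h1
      | succ i => simpa using hps i


lemma bsplit : ∀ {n : ℕ} (a : Fin n → α) (c : Fin n → ℕ) (p q : List α),
    powword a c = p ++ q →
    ∃ c1 : Fin n → ℕ, (∀ i, c1 i ≤ c i) ∧ p = powword a c1 ∧
      q = powword a (fun i => c i - c1 i) ∧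
      (∀ i i' : Fin n, i < i' → c1 i' ≠ 0 → c1 i = c i) := by
  intro n
  induction n with
  | zero =>
    intro a c p q h
    have h0 : p = [] ∧ q = [] := by
      rw [← List.append_eq_nil_iff]
      rw [← h]
      exact powword_eq_nil a (fun i => i.elim0)
    refine ⟨fun _ => 0, fun i => i.elim0, ?_, ?_, fun i => i.elim0⟩
    · rw [h0.1, powword_eq_nil a (fun i => i.elim0)]
    · rw [h0.2, powword_eq_nil a (fun i => i.elim0)]
  | succ n ih =>
    intro a c p q h
    rw [powword_succ] at h
    by_cases hp : p.length ≤ c 0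
    · have hpr : p = List.replicate p.length (a 0) := by
        have h1 : (List.replicate (c 0) (a 0) ++
            powword (fun i => a i.succ) (fun i => c i.succ)).take p.length = p := by
          rw [h]; exact List.take_left' rfl
        rwa [List.take_append, List.take_replicate, List.length_replicate,
          Nat.sub_eq_zero_of_le hp, List.take_zero, List.append_nil,
          Nat.min_eq_left hp, eq_comm] at h1
      have hq : q = List.replicate (c 0 - p.length) (a 0) ++
          powword (fun i => a i.succ) (fun i => c i.succ) := by
        have h1 : (List.replicate (c 0) (a 0) ++
            powword (fun i => a i.succ) (fun i => c i.succ)).drop p.length = q := by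
          rw [h, List.drop_append, Nat.sub_self, List.drop_length,
            List.nil_append, List.drop_zero]
        rwa [List.drop_append, List.drop_replicate, List.length_replicate,
          Nat.sub_eq_zero_of_le hp, List.drop_zero, eq_comm] at h1
      refine ⟨Fin.cons p.length (fun _ => 0), ?_, ?_, ?_, ?_⟩
      · intro i
        induction i using Fin.cases with
        | zero => simpa using hp
        | succ i => simp
      · rw [powword_succ]
        simp only [Fin.cons_zero, Fin.cons_succ]
        rw [powword_eq_nil _ (fun _ => rfl), List.append_nil]
        exact hpr
      · rw [powword_succ]
        simp only [Fin.cons_zero, Fin.cons_succ, Nat.sub_zero]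
        exact hq
      · intro i i' hlt hne
        induction i' using Fin.cases with
        | zero => exact absurd hlt (Fin.not_lt_zero i)
        | succ s => simp at hne
    · push_neg at hp
      have h0 : c 0 ≤ p.length := le_of_lt hp
      have hptake : p.take (c 0) = List.replicate (c 0) (a 0) := by
        have h1 : (List.replicate (c 0) (a 0) ++
            powword (fun i => a i.succ) (fun i => c i.succ)).take (c 0) = p.take (c 0) := by
          rw [h, List.take_append_of_le_length h0]
        rwa [List.take_append, List.take_replicate, List.length_replicate,
          Nat.sub_self, List.take_zero, List.append_nil, Nat.min_self, eq_comm] at h1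
      have hrest : powword (fun i => a i.succ) (fun i => c i.succ) = p.drop (c 0) ++ q := by
        have h1 := congrArg (List.drop (c 0)) h
        rwa [List.drop_append, List.drop_replicate, List.length_replicate,
          Nat.sub_self, List.drop_zero, List.drop_append,
          Nat.sub_eq_zero_of_le h0, List.drop_zero] at h1
      obtain ⟨c1', hle', hp', hq', hcross'⟩ := ih _ _ _ _ hrest
      refine ⟨Fin.cons (c 0) c1', ?_, ?_, ?_, ?_⟩
      · intro i
        induction i using Fin.cases with
        | zero => simp
        | succ i => simpa using hle' i
      · rw [powword_succ]
        simp only [Fin.cons_zero, Fin.cons_succ]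
        rw [← hp', ← hptake]
        exact (List.take_append_drop _ _).symm
      · rw [powword_succ]
        simp only [Fin.cons_zero, Fin.cons_succ, Nat.sub_self, List.replicate_zero,
          List.nil_append]
        exact hq'
      · intro i i' hlt hne
        induction i using Fin.cases with
        | zero => simp
        | succ s =>
          induction i' using Fin.cases with
          | zero => exact absurd hlt (fun hc => Fin.not_lt_zero _ hc)
          | succ s' =>
            simp only [Fin.cons_succ] at hne ⊢
            exact hcross' s s' (Fin.succ_lt_succ_iff.mp hlt) hne

lemma main_split : ∀ {k : ℕ} {n : ℕ} (a : Fin n → α) (c : Fin n → ℕ) (ps : Fin k → List α),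
    powword a c = (List.ofFn ps).flatten →
    ∃ r : Fin n → Fin k → ℕ, (∀ i, ∑ j, r i j = c i) ∧
      (∀ j, powword a (fun i => r i j) = ps j) ∧
      (∀ (i i' : Fin n) (j j' : Fin k), i < i' → j' < j → r i j ≠ 0 → r i' j' = 0) := by
  intro k
  induction k with
  | zero =>
    intro n a c ps h
    have hc : ∀ i, c i = 0 := by
      have hl := congrArg List.length h
      rw [length_powword] at hl
      simp only [List.ofFn_zero, List.flatten_nil, List.length_nil] at hl
      exact fun i => Finset.sum_eq_zero_iff.mp hl i (Finset.mem_univ i)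
    exact ⟨fun i => Fin.elim0, fun i => by simpa using (hc i).symm,
      fun j => j.elim0, fun i i' j => j.elim0⟩
  | succ k ih =>
    intro n a c ps h
    rw [List.ofFn_succ, List.flatten_cons] at h
    obtain ⟨c1, hle, hp0, hrest, hcross⟩ := bsplit a c (ps 0) _ h
    obtain ⟨r', hsum', hps', hstair'⟩ := ih a (fun i => c i - c1 i) (fun j => ps j.succ) hrest.symm
    refine ⟨fun i => Fin.cons (c1 i) (r' i), ?_, ?_, ?_⟩
    · intro i
      rw [Fin.sum_cons, hsum' i]
      have := hle i
      omega
    · intro j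
      induction j using Fin.cases with
      | zero => simpa using hp0.symm
      | succ j => simpa using hps' j
    · intro i i' j j' hii hjj hne
      induction j' using Fin.cases with
      | zero =>
        simp only [Fin.cons_zero]
        by_contra h0
        have hci : c1 i = c i := hcross i i' hii h0
        obtain ⟨j2, rfl⟩ : ∃ j2 : Fin k, j = j2.succ := by
          induction j using Fin.cases with
          | zero => exact absurd hjj (Fin.not_lt_zero 0)
          | succ j2 => exact ⟨j2, rfl⟩
        have hz : r' i j2 = 0 := by
          have hz0 : ∑ jj, r' i jj = 0 := by
            rw [hsum' i]; omega
          exact Finset.sum_eq_zero_iff.mp hz0 j2 (Finset.mem_univ j2)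
        exact hne (by simpa using hz)
      | succ j'' =>
        obtain ⟨j2, rfl⟩ : ∃ j2 : Fin k, j = j2.succ := by
          induction j using Fin.cases with
          | zero => exact absurd hjj (Fin.not_lt_zero _)
          | succ j2 => exact ⟨j2, rfl⟩
        simp only [Fin.cons_succ] at hne ⊢
        exact hstair' i i' j2 j'' hii (Fin.succ_lt_succ_iff.mp hjj) hne


lemma sublist_flatten' {l₁ l₂ : List (List α)} (h : l₁ <+ l₂) :
    l₁.flatten <+ l₂.flatten := by
  induction h with
  | slnil => simp
  | cons a h ih => exact ih.trans (by rw [List.flatten_cons]; exact List.sublist_append_right _ _)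
  | cons_cons a h ih =>
    rw [List.flatten_cons, List.flatten_cons]
    exact (List.Sublist.refl a).append ih

lemma window {n : ℕ} (F : Fin n → List α) (s m : ℕ) (h : s + m ≤ n) :
    (List.ofFn fun t : Fin m => F ⟨s + (t : ℕ), by omega⟩).flatten <+ (List.ofFn F).flatten := by
  have key : (List.ofFn fun t : Fin m => F ⟨s + (t : ℕ), by omega⟩)
      = ((List.ofFn F).drop s).take m := by
    apply List.ext_getElem
    · simp; omega
    · intro i h1 h2
      simp only [List.getElem_take, List.getElem_drop, List.getElem_ofFn]
  rw [key]
  exact sublist_flatten' ((List.take_sublist _ _).trans (List.drop_sublist _ _))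

lemma down {n : ℕ} (S : Finset (Fin n))
    (hdc : ∀ i i' : Fin n, i ≤ i' → i' ∈ S → i ∈ S) (p : Fin n) :
    p ∈ S ↔ (p : ℕ) < S.card := by
  constructor
  · intro hp
    have hsub : Finset.Iic p ⊆ S := fun i hi => hdc i p (Finset.mem_Iic.mp hi) hp
    have := Finset.card_le_card hsub
    rw [Fin.card_Iic] at this
    omega
  · intro hp
    by_contra hps
    have hsub : S ⊆ Finset.Iio p := fun i hi => Finset.mem_Iio.mpr (by
      by_contra hip
      exact hps (hdc p i (le_of_not_gt hip) hi))
    have := Finset.card_le_card hsub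
    rw [Fin.card_Iio] at this
    omega

lemma fiber_char {n k : ℕ} (σ : Fin n → Fin k) (hmono : Monotone σ) (p : Fin n) (j : Fin k) :
    σ p = j ↔
      ((∑ j' ∈ Finset.univ.filter (fun j' => j' < j),
          (Finset.univ.filter (fun i => σ i = j')).card) ≤ (p : ℕ) ∧
       (p : ℕ) < (∑ j' ∈ Finset.univ.filter (fun j' => j' < j),
          (Finset.univ.filter (fun i => σ i = j')).card)
          + (Finset.univ.filter (fun i => σ i = j)).card) := by
  have hlt : (Finset.univ.filter (fun i : Fin n => σ i < j)).card
      = ∑ j' ∈ Finset.univ.filter (fun j' => j' < j),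
          (Finset.univ.filter (fun i => σ i = j')).card := by
    rw [Finset.card_eq_sum_card_fiberwise (f := σ)
      (t := Finset.univ.filter (fun j' => j' < j))
      (fun i hi => by
        simp only [Finset.coe_filter, Set.mem_setOf_eq, Finset.mem_filter, Finset.mem_univ,
          true_and] at hi ⊢
        exact hi)]
    refine Finset.sum_congr rfl (fun b hb => ?_)
    have hb' : b < j := by simpa using hb
    congr 1
    ext i
    simp only [Finset.mem_filter, Finset.mem_univ, true_and]
    exact ⟨And.right, fun he => ⟨he ▸ hb', he⟩⟩
  have hle : (Finset.univ.filter (fun i : Fin n => σ i ≤ j)).card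
      = (∑ j' ∈ Finset.univ.filter (fun j' => j' < j),
          (Finset.univ.filter (fun i => σ i = j')).card)
        + (Finset.univ.filter (fun i => σ i = j)).card := by
    have hsplit : Finset.univ.filter (fun i : Fin n => σ i ≤ j)
        = Finset.univ.filter (fun i => σ i < j) ∪ Finset.univ.filter (fun i => σ i = j) := by
      ext i
      simp only [Finset.mem_filter, Finset.mem_univ, true_and, Finset.mem_union]
      exact ⟨fun h => (lt_or_eq_of_le h).imp id id, fun h => h.elim le_of_lt le_of_eq⟩
    rw [hsplit, Finset.card_union_of_disjoint, hlt]
    exact Finset.disjoint_left.mpr (fun i hi1 hi2 => by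
      simp only [Finset.mem_filter, Finset.mem_univ, true_and] at hi1 hi2
      exact absurd hi2 (ne_of_lt hi1))
  have dlt := down (Finset.univ.filter (fun i : Fin n => σ i < j)) (fun i i' hii hi' => by
      simp only [Finset.mem_filter, Finset.mem_univ, true_and] at hi' ⊢
      exact lt_of_le_of_lt (hmono hii) hi') p
  have dle := down (Finset.univ.filter (fun i : Fin n => σ i ≤ j)) (fun i i' hii hi' => by
      simp only [Finset.mem_filter, Finset.mem_univ, true_and] at hi' ⊢
      exact le_trans (hmono hii) hi') p
  simp only [Finset.mem_filter, Finset.mem_univ, true_and] at dlt dle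
  rw [hlt] at dlt
  rw [hle] at dle
  constructor
  · intro he
    refine ⟨?_, dle.mp (le_of_eq he)⟩
    have h1 : ¬ σ p < j := by rw [he]; exact lt_irrefl j
    have h2 := (not_iff_not.mpr dlt).mp h1
    omega
  · rintro ⟨h1, h2⟩
    have hl : σ p ≤ j := dle.mpr h2
    have hnl : ¬ σ p < j := fun hc => by
      have := dlt.mp hc; omega
    exact le_antisymm hl (le_of_not_gt hnl)


lemma perx {n k : ℕ} (hk : 0 < k) (a : Fin n → α) (Ls : Fin k → Set (List α))
    (h : ∀ x : Fin n → ℕ, (fun i => List.replicate (x i) (a i)) ∈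
        dclT (FactorTuples n (LangConcFn Ls)))
    (x : Fin n → ℕ) :
    ∃ (ns : Fin k → ℕ) (hs : ∑ j, ns j = n),
      (fun i => List.replicate (x i) (a i)) ∈ dclT (ProdFT ns Ls hs) := by
  classical
  obtain ⟨v, hv, hsub⟩ := h (fun i => k * x i)
  obtain ⟨u, hu, g, hug⟩ := hv
  obtain ⟨ws, hws, huw⟩ := hu
  set c : Fin n → ℕ := fun i => k * x i with hc
  have hWu : powword a c <+ u := by
    rw [hug]
    refine List.Sublist.trans ?_ (List.sublist_append_left _ _)
    exact flatten_ofFn_sublist (fun i => ((hsub i).trans (List.sublist_append_right _ _)))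
  rw [huw] at hWu
  obtain ⟨ps, hW, hpw⟩ := splitsub ws _ hWu
  obtain ⟨r, hsum, hpieces, hstair⟩ := main_split a c ps hW
  -- choice of a block for each coordinate with nonzero exponent
  have hJex : ∀ i : Fin n, ∃ j : Fin k, x i ≠ 0 → x i ≤ r i j := by
    intro i
    by_cases hx : x i = 0
    · exact ⟨⟨0, hk⟩, fun h' => absurd hx h'⟩
    · by_contra hcon
      push_neg at hcon
      have hb : ∑ j, r i j ≤ ∑ _j : Fin k, (x i - 1) :=
        Finset.sum_le_sum (fun j _ => by have := (hcon j).2; omega)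
      rw [Finset.sum_const, Finset.card_univ, Fintype.card_fin, smul_eq_mul] at hb
      have hmul : k * (x i - 1) + k = k * x i := by
        rw [← Nat.mul_succ]
        congr 1
        omega
      have hci := hsum i
      simp only [hc] at hci
      omega
  choose J hJ using hJex
  have hJmono : ∀ i i' : Fin n, i < i' → x i ≠ 0 → x i' ≠ 0 → J i ≤ J i' := by
    intro i i' hii hxi hxi'
    by_contra hlt
    push_neg at hlt
    have h1 : r i (J i) ≠ 0 := by have := hJ i hxi; omega
    have h2 : r i' (J i') = 0 := hstair i i' (J i) (J i') hii hlt h1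
    have := hJ i' hxi'
    omega
  -- total monotone assignment
  have hbound : ∀ (i : Fin n),
      (Finset.univ.filter (fun i' => i' ≤ i ∧ x i' ≠ 0)).sup (fun i' => (J i' : ℕ)) < k := by
    intro i
    refine (Finset.sup_lt_iff (by simpa using hk)).mpr ?_
    intro i' _
    exact (J i').isLt
  set σ : Fin n → Fin k := fun i => ⟨_, hbound i⟩ with hσdef
  have hσmono : Monotone σ := by
    intro i i' hii
    have hsup : ((Finset.univ.filter (fun i'' => i'' ≤ i ∧ x i'' ≠ 0)).sup
          (fun i'' => (J i'' : ℕ)))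
        ≤ ((Finset.univ.filter (fun i'' => i'' ≤ i' ∧ x i'' ≠ 0)).sup
          (fun i'' => (J i'' : ℕ))) := by
      apply Finset.sup_mono
      intro p hp
      simp only [Finset.mem_filter, Finset.mem_univ, true_and] at hp ⊢
      exact ⟨hp.1.trans hii, hp.2⟩
    exact hsup
  have hσJ : ∀ i, x i ≠ 0 → σ i = J i := by
    intro i hx
    apply Fin.ext
    show ((Finset.univ.filter (fun i'' => i'' ≤ i ∧ x i'' ≠ 0)).sup
        (fun i'' => (J i'' : ℕ))) = (J i : ℕ)
    apply _root_.le_antisymm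
    · apply Finset.sup_le
      intro i' hi'
      simp only [Finset.mem_filter, Finset.mem_univ, true_and] at hi'
      rcases lt_or_eq_of_le hi'.1 with hlt | heq
      · have hle := hJmono i' i hlt hi'.2 hx
        exact hle
      · rw [heq]
    · exact Finset.le_sup (f := fun i'' => (J i'' : ℕ)) (by
        simp only [Finset.mem_filter, Finset.mem_univ, true_and]
        exact ⟨le_refl i, hx⟩)
  have hkey : ∀ i, x i ≤ r i (σ i) := by
    intro i
    by_cases hx : x i = 0
    · omega
    · rw [hσJ i hx]
      exact hJ i hx
  -- the decomposition
  set ns : Fin k → ℕ := fun j => (Finset.univ.filter (fun i => σ i = j)).card with hnsdef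
  have hs : ∑ j, ns j = n := by
    have hfw := Finset.card_eq_sum_card_fiberwise (f := σ) (s := (Finset.univ : Finset (Fin n)))
      (t := Finset.univ) (fun x _ => Finset.mem_univ _)
    simp only [Finset.card_univ, Fintype.card_fin] at hfw
    exact hfw.symm
  set CF : Fin k → ℕ := fun j => ∑ j' ∈ Finset.univ.filter (fun j' => j' < j), ns j' with hCFdef
  have hfib : ∀ (p : Fin n) (j : Fin k), σ p = j ↔ (CF j ≤ (p : ℕ) ∧ (p : ℕ) < CF j + ns j) :=
    fun p j => fiber_char σ hσmono p j
  have hbiv : ∀ (j : Fin k) (t : Fin (ns j)), ((blockIdx ns hs j t : Fin n) : ℕ) = CF j + (t : ℕ) :=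
    fun j t => rfl
  have hσbi : ∀ (j : Fin k) (t : Fin (ns j)), σ (blockIdx ns hs j t) = j := by
    intro j t
    rw [hfib]
    constructor
    · rw [hbiv j t]
      exact Nat.le_add_right _ _
    · rw [hbiv j t]
      exact Nat.add_lt_add_left t.isLt _
  have hCFle : ∀ i : Fin n, CF (σ i) ≤ (i : ℕ) ∧ (i : ℕ) < CF (σ i) + ns (σ i) :=
    fun i => (hfib i (σ i)).mp rfl
  have hCFns : ∀ j : Fin k, CF j + ns j ≤ n := by
    intro j
    have hj : j ∉ Finset.univ.filter (fun j' => j' < j) := by simp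
    have h1 : ∑ j' ∈ insert j (Finset.univ.filter (fun j' => j' < j)), ns j'
        ≤ ∑ j', ns j' := Finset.sum_le_sum_of_subset (Finset.subset_univ _)
    rw [Finset.sum_insert hj] at h1
    have hCFeq : CF j = ∑ j' ∈ Finset.univ.filter (fun j' => j' < j), ns j' := rfl
    omega
  -- each block's word embeds into ws j
  have hblock : ∀ j : Fin k,
      (List.ofFn fun t : Fin (ns j) =>
        List.replicate (x (blockIdx ns hs j t)) (a (blockIdx ns hs j t))).flatten <+ ws j := by
    intro j
    have s1 : (List.ofFn fun t : Fin (ns j) =>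
          List.replicate (x (blockIdx ns hs j t)) (a (blockIdx ns hs j t))).flatten <+
        (List.ofFn fun t : Fin (ns j) =>
          List.replicate (r (blockIdx ns hs j t) j) (a (blockIdx ns hs j t))).flatten := by
      refine flatten_ofFn_sublist (fun t => (List.replicate_sublist_replicate _).mpr ?_)
      have hx := hkey (blockIdx ns hs j t)
      rwa [hσbi j t] at hx
    have s2 : (List.ofFn fun t : Fin (ns j) =>
          List.replicate (r (blockIdx ns hs j t) j) (a (blockIdx ns hs j t))).flatten <+
        (List.ofFn fun i : Fin n => List.replicate (r i j) (a i)).flatten := by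
      have hw := window (fun i : Fin n => List.replicate (r i j) (a i)) (CF j) (ns j) (hCFns j)
      have hFeq : (List.ofFn fun t : Fin (ns j) =>
            (fun i : Fin n => List.replicate (r i j) (a i)) ⟨CF j + (t : ℕ), by
              have := t.isLt
              have := hCFns j
              omega⟩)
          = (List.ofFn fun t : Fin (ns j) =>
            List.replicate (r (blockIdx ns hs j t) j) (a (blockIdx ns hs j t))) := by
        refine congrArg List.ofFn (funext fun t => ?_)
        have hix : (⟨CF j + (t : ℕ), by
              have := t.isLt
              have := hCFns j
              omega⟩ : Fin n) = blockIdx ns hs j t := Fin.ext rfl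
        rw [hix]
      rwa [hFeq] at hw
    have s3 : (List.ofFn fun i : Fin n => List.replicate (r i j) (a i)).flatten = ps j :=
      hpieces j
    exact s1.trans (s2.trans (s3 ▸ hpw j))
  have hq : ∀ j : Fin k, ∃ (q : Fin (ns j) → List α) (rest : List α),
      ws j = (List.ofFn q).flatten ++ rest ∧
      ∀ t, List.replicate (x (blockIdx ns hs j t)) (a (blockIdx ns hs j t)) <+ q t :=
    fun j => embed _ _ (hblock j)
  choose q rest hwsq hzq using hq
  have hoff : ∀ i : Fin n, (i : ℕ) - CF (σ i) < ns (σ i) := fun i => by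
    have := hCFle i
    omega
  have congr_q : ∀ {j1 j2 : Fin k} (hjj : j1 = j2) (t1 : Fin (ns j1)) (t2 : Fin (ns j2)),
      (t1 : ℕ) = (t2 : ℕ) → q j1 t1 = q j2 t2 := by
    rintro j1 j2 rfl t1 t2 ht
    congr 1
    exact Fin.ext ht
  refine ⟨ns, hs, fun i => q (σ i) ⟨(i : ℕ) - CF (σ i), hoff i⟩, ?_, ?_⟩
  · -- membership in ProdFT
    intro j
    have hwq : (fun t : Fin (ns j) =>
        q (σ (blockIdx ns hs j t)) ⟨((blockIdx ns hs j t : Fin n) : ℕ) -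
          CF (σ (blockIdx ns hs j t)), hoff _⟩) = q j := by
      funext t
      refine congr_q (hσbi j t) _ t ?_
      show ((blockIdx ns hs j t : Fin n) : ℕ) - CF (σ (blockIdx ns hs j t)) = (t : ℕ)
      rw [hσbi j t, hbiv]
      omega
    rw [hwq]
    refine ⟨ws j, hws j, fun t => if (t : ℕ) = ns j then rest j else [], ?_⟩
    have hcond : ∀ t : Fin (ns j),
        ((if ((t.castSucc : Fin (ns j + 1)) : ℕ) = ns j then rest j else []) : List α) = [] :=
      fun t => if_neg (by simpa using t.isLt.ne)
    have e1 : (List.ofFn fun t : Fin (ns j) =>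
        (if ((t.castSucc : Fin (ns j + 1)) : ℕ) = ns j then rest j else []) ++ q j t)
        = List.ofFn (q j) := by
      refine congrArg List.ofFn (funext fun t => ?_)
      rw [hcond t, List.nil_append]
    rw [e1]
    show ws j = (List.ofFn (q j)).flatten ++
      (if ((Fin.last (ns j) : Fin (ns j + 1)) : ℕ) = ns j then rest j else [])
    rw [if_pos (Fin.val_last (ns j))]
    exact hwsq j
  · intro i
    have hz := hzq (σ i) ⟨(i : ℕ) - CF (σ i), hoff i⟩
    have hbii : blockIdx ns hs (σ i) ⟨(i : ℕ) - CF (σ i), hoff i⟩ = i := by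
      apply Fin.ext
      rw [hbiv]
      have := hCFle i
      show CF (σ i) + ((i : ℕ) - CF (σ i)) = (i : ℕ)
      omega
    rwa [hbii] at hz


end SupPredAux

/-- If `a1* × ⋯ × an* ⊆ dcl(F_n(L1⋯Lk))` then there is a decomposition
`n = n1 + ⋯ + nk` with `a1* × ⋯ × an* ⊆ dcl(F_{n1}(L1) × ⋯ × F_{nk}(Lk))`. -/
theorem sup_predicate_decomposition {α : Type} [Fintype α] {n k : ℕ}
    (a : Fin n → α) (Ls : Fin k → Set (List α))
    (h : ∀ x : Fin n → ℕ, (fun i => List.replicate (x i) (a i)) ∈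
        dclT (FactorTuples n (LangConcFn Ls))) :
    ∃ (ns : Fin k → ℕ) (hs : ∑ j, ns j = n),
      ∀ x : Fin n → ℕ,
        (fun i => List.replicate (x i) (a i)) ∈ dclT (ProdFT ns Ls hs) := by
  classical
  rcases Nat.eq_zero_or_pos k with hk0 | hk
  · subst hk0
    have hn : n = 0 := by
      by_contra hn0
      obtain ⟨v, hv, hsub⟩ := h (fun _ => 1)
      obtain ⟨u, hu, g, hug⟩ := hv
      obtain ⟨ws, -, huw⟩ := hu
      have hu0 : u = [] := by simpa using huw
      rw [hu0] at hug
      have h2 : (List.ofFn fun i : Fin n => g i.castSucc ++ v i).flatten = [] :=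
        (List.append_eq_nil_iff.mp hug.symm).1
      set i0 : Fin n := ⟨0, Nat.pos_of_ne_zero hn0⟩
      have hmem : g i0.castSucc ++ v i0 ∈ List.ofFn fun i : Fin n => g i.castSucc ++ v i := by
        rw [List.mem_ofFn]
        exact ⟨i0, rfl⟩
      have hv0 : v i0 = [] :=
        (List.append_eq_nil_iff.mp (List.flatten_eq_nil_iff.mp h2 _ hmem)).2
      have hcontr := hsub i0
      rw [hv0] at hcontr
      simp at hcontr
    subst hn
    refine ⟨fun j => j.elim0, by simp, fun x => ⟨fun i => List.replicate (x i) (a i),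
      fun j => j.elim0, fun i => List.Sublist.refl _⟩⟩
  · by_contra hcon
    push_neg at hcon
    have hbad : ∀ e : Fin k → Fin (n + 1), ∃ x : Fin n → ℕ,
        ∀ hse : ∑ j, ((e j : ℕ)) = n,
          (fun i => List.replicate (x i) (a i)) ∉ dclT (ProdFT (fun j => (e j : ℕ)) Ls hse) := by
      intro e
      by_cases hse : ∑ j, ((e j : ℕ)) = n
      · obtain ⟨x, hx⟩ := hcon (fun j => (e j : ℕ)) hse
        exact ⟨x, fun _ => hx⟩
      · exact ⟨fun _ => 0, fun hse' => absurd hse' hse⟩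
    choose xf hxf using hbad
    obtain ⟨ns, hs, hP⟩ := SupPredAux.perx hk a Ls h
      (fun i => Finset.univ.sup (fun e : Fin k → Fin (n + 1) => xf e i))
    have hnsle : ∀ j, ns j ≤ n := by
      intro j
      have := Finset.single_le_sum (f := ns) (fun _ _ => Nat.zero_le _) (Finset.mem_univ j)
      omega
    set e0 : Fin k → Fin (n + 1) := fun j => ⟨ns j, Nat.lt_succ_of_le (hnsle j)⟩ with he0
    have hee : (fun j => ((e0 j : ℕ))) = ns := funext fun j => rfl
    have hse0 : ∑ j, ((e0 j : ℕ)) = n := by rw [hee]; exact hs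
    have hmono : (fun i => List.replicate (xf e0 i) (a i)) ∈ dclT (ProdFT ns Ls hs) := by
      obtain ⟨w, hw, hws⟩ := hP
      exact ⟨w, hw, fun i => ((List.replicate_sublist_replicate _).mpr
        (Finset.le_sup (Finset.mem_univ e0))).trans (hws i)⟩
    exact hxf e0 hse0 hmono
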